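/- Let R₀ > 0, f₋, f₊, M be real numbers with M ≠ 0, and let V = −((R₀²f₋ + R₀²f₊ − M²)² − 4R₀⁴f₋f₊)/(4M²R₀²). If R₀ is a turning point, i.e. V = 0, then f₋ ≥ 0 and f₊ ≥ 0. Hence turning points of the shell motion can only occur in the closure of an R-region of each of the two spacetimes. -/

import Mathlib

lemma stmt_11_aux (A B m : ℝ) (hm : 0 < m) (key : (A + B - m) ^ 2 - 4 * A * B = 0) :
    0 ≤ A ∧ 0 ≤ B := by
  have hAB : 0 ≤ A * B := by nlinarith [sq_nonneg (A + B - m)]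
  have hsum : 0 < A + B := by nlinarith [sq_nonneg (A - B), sq_nonneg m, mul_pos hm hm]
  constructor
  · rcases lt_or_ge A 0 with h | h
    · exfalso
      have hB : B ≤ 0 := by
        by_contra hB
        push_neg at hB
        nlinarith
      linarith
    · exact h
  · rcases lt_or_ge B 0 with h | h
    · exfalso
      have hA : A ≤ 0 := by
        by_contra hA
        push_neg at hA
        nlinarith
      linarith
    · exact h

/-- Let `R₀ > 0`, `fm` (= f₋), `fp` (= f₊), `M ≠ 0` be reals, and
`V = −((R₀²fm + R₀²fp − M²)² − 4R₀⁴fm·fp)/(4M²R₀²)`. If `R₀` is a turning point,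
i.e. `V = 0`, then `fm ≥ 0` and `fp ≥ 0`: turning points can only occur in the
closure of an R-region of each of the two spacetimes. -/
theorem stmt_11 (R₀ fm fp M V : ℝ) (hR : 0 < R₀) (hM : M ≠ 0)
    (hV : V = -((R₀ ^ 2 * fm + R₀ ^ 2 * fp - M ^ 2) ^ 2 - 4 * R₀ ^ 4 * fm * fp) /
      (4 * M ^ 2 * R₀ ^ 2))
    (hturn : V = 0) :
    0 ≤ fm ∧ 0 ≤ fp := by
  have hM2 : 0 < M ^ 2 := by positivity
  have key : (R₀ ^ 2 * fm + R₀ ^ 2 * fp - M ^ 2) ^ 2 - 4 * R₀ ^ 4 * fm * fp = 0 := by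
    have h := hturn ▸ hV
    field_simp at h
    linarith [h.symm]
  have key' : (R₀ ^ 2 * fm + R₀ ^ 2 * fp - M ^ 2) ^ 2
      - 4 * (R₀ ^ 2 * fm) * (R₀ ^ 2 * fp) = 0 := by linarith [key, (by ring :
        4 * R₀ ^ 4 * fm * fp = 4 * (R₀ ^ 2 * fm) * (R₀ ^ 2 * fp))]
  obtain ⟨hA, hB⟩ := stmt_11_aux _ _ _ hM2 key'
  have hR2 : 0 < R₀ ^ 2 := by positivity
  exact ⟨nonneg_of_mul_nonneg_right (by linarith) hR2,
    nonneg_of_mul_nonneg_right (by linarith) hR2⟩
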